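/- Let p and q be distinct primes with p not dividing q−1. Let h ∈ SU(p) be an element of order q such that 1 is not an eigenvalue of h (i.e., 1 is not in the spectrum of h as a complex matrix). If t is a positive integer such that h^t is conjugate to h in SU(p), then t ≡ 1 (mod q). -/

import Mathlib

open Module End Submodule Subgroup

open Module End Submodule

-- eigenspace conjugation
lemma eig_conj {K V : Type*} [Field K] [AddCommGroup V] [Module K V]
    (g : (Module.End K V)ˣ) (f : Module.End K V) (μ : K) :
    Module.End.eigenspace ((g : Module.End K V) * f * (↑g⁻¹ : Module.End K V)) μ
      = Submodule.map (g : Module.End K V) (Module.End.eigenspace f μ) := by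
  ext x
  rw [Module.End.mem_eigenspace_iff]
  constructor
  · intro hx
    refine ⟨(↑g⁻¹ : Module.End K V) x, ?_, ?_⟩
    · rw [SetLike.mem_coe, Module.End.mem_eigenspace_iff]
      have := congrArg (fun y => (↑g⁻¹ : Module.End K V) y) hx
      simp only [Module.End.mul_apply] at this ⊢
      have h1 : ∀ y, (↑g⁻¹ : Module.End K V) ((g : Module.End K V) y) = y := fun y => by
        rw [← Module.End.mul_apply, ← Units.val_mul, inv_mul_cancel, Units.val_one,
          Module.End.one_apply]
      rw [h1] at this
      rw [this, map_smul]
    · show (g : Module.End K V) ((↑g⁻¹ : Module.End K V) x) = x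
      rw [← Module.End.mul_apply, ← Units.val_mul, mul_inv_cancel, Units.val_one,
        Module.End.one_apply]
  · rintro ⟨y, hy, rfl⟩
    rw [SetLike.mem_coe, Module.End.mem_eigenspace_iff] at hy
    simp only [Module.End.mul_apply]
    have h1 : ∀ z, (↑g⁻¹ : Module.End K V) ((g : Module.End K V) z) = z := fun z => by
      rw [← Module.End.mul_apply, ← Units.val_mul, inv_mul_cancel, Units.val_one,
        Module.End.one_apply]
    rw [h1, hy, map_smul]

lemma finrank_eig_conj {K V : Type*} [Field K] [AddCommGroup V] [Module K V]
    (g : (Module.End K V)ˣ) (f : Module.End K V) (μ : K) :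
    finrank K (Module.End.eigenspace ((g : Module.End K V) * f * (↑g⁻¹ : Module.End K V)) μ)
      = finrank K (Module.End.eigenspace f μ) := by
  rw [eig_conj]
  have hinj : Function.Injective (g : Module.End K V) := by
    intro a b hab
    have := congrArg (fun y => (↑g⁻¹ : Module.End K V) y) hab
    simpa only [← Module.End.mul_apply, ← Units.val_mul, inv_mul_cancel, Units.val_one,
      Module.End.one_apply] using this
  exact (LinearEquiv.finrank_eq
    (Submodule.equivMapOfInjective _ hinj (Module.End.eigenspace f μ))).symm

-- eigenspace and powers
lemma eig_le_pow {K V : Type*} [Field K] [AddCommGroup V] [Module K V]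
    (f : Module.End K V) (μ : K) (k : ℕ) :
    Module.End.eigenspace f μ ≤ Module.End.eigenspace (f ^ k) (μ ^ k) := by
  intro x hx
  rw [Module.End.mem_eigenspace_iff] at hx ⊢
  induction k with
  | zero => simp
  | succ n ih =>
    rw [pow_succ, pow_succ, Module.End.mul_apply, hx, map_smul, ih, smul_smul,
      mul_comm]

lemma eig_pow_eq {K V : Type*} [Field K] [AddCommGroup V] [Module K V]
    (f : Module.End K V) (μ : K) {q t t' : ℕ} (hfq : f ^ q = 1) (hμq : μ ^ q = 1)
    (htt' : t * t' % q = 1) :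
    Module.End.eigenspace (f ^ t) (μ ^ t) = Module.End.eigenspace f μ := by
  have key : ∀ (g : Module.End K V) (ν : K), g ^ q = 1 → ν ^ q = 1 →
      g ^ (t * t') = g ∧ ν ^ (t * t') = ν := by
    intro g ν hg hν
    have : t * t' = q * (t * t' / q) + 1 := by
      conv_lhs => rw [← Nat.div_add_mod (t * t') q, htt']
    constructor
    · rw [this, pow_add, pow_mul, hg, one_pow, one_mul, pow_one]
    · rw [this, pow_add, pow_mul, hν, one_pow, one_mul, pow_one]
  refine le_antisymm ?_ (eig_le_pow f μ t)
  have h2 := eig_le_pow (f ^ t) (μ ^ t) t'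
  rw [← pow_mul, ← pow_mul, (key f μ hfq hμq).1, (key f μ hfq hμq).2] at h2
  exact h2

open Subgroup

lemma orderOf_dvd_sum {G : Type*} [CommGroup G] [Fintype G] [DecidableEq G]
    (u : G) (n : G → ℕ) (hn : ∀ a, n (u * a) = n a) :
    orderOf u ∣ ∑ a, n a := by
  classical
  set H : Subgroup G := Subgroup.zpowers u with hH
  -- n is constant on cosets
  have hpow : ∀ (k : ℕ) (a : G), n (u ^ k * a) = n a := by
    intro k
    induction k with
    | zero => simp
    | succ m ih => intro a; rw [pow_succ, mul_comm (u ^ m) u, mul_assoc, hn, ih]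
  have hconst : ∀ x y : G, (QuotientGroup.mk x : G ⧸ H) = QuotientGroup.mk y → n x = n y := by
    intro x y hxy
    have hmem : x⁻¹ * y ∈ H := (QuotientGroup.eq ).mp hxy
    rw [← mem_powers_iff_mem_zpowers] at hmem
    obtain ⟨k, hk⟩ := hmem
    simp only at hk
    have : y = u ^ k * x := by
      rw [hk, mul_comm x⁻¹ y, mul_assoc, inv_mul_cancel, mul_one]
    rw [this, hpow]
  -- fiber equiv
  have fib : ∀ c : G ⧸ H, Fintype.card {a : G // (QuotientGroup.mk a : G ⧸ H) = c}
      = orderOf u := by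
    intro c
    have e : {a : G // (QuotientGroup.mk a : G ⧸ H) = c} ≃ H :=
      { toFun := fun a => ⟨(Quotient.out c)⁻¹ * a.1, by
          have : (QuotientGroup.mk (Quotient.out c) : G ⧸ H) = QuotientGroup.mk a.1 := by
            rw [a.2]; exact QuotientGroup.out_eq' c
          exact (QuotientGroup.eq).mp this⟩
        invFun := fun h => ⟨Quotient.out c * h.1, by
          have : (QuotientGroup.mk (Quotient.out c * h.1) : G ⧸ H)
              = QuotientGroup.mk (Quotient.out c) := by
            apply (QuotientGroup.eq).mpr
            group
            simpa using H.inv_mem h.2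
          rw [this]; exact QuotientGroup.out_eq' c⟩
        left_inv := fun a => by ext; simp [mul_assoc]
        right_inv := fun h => by ext; simp [← mul_assoc] }
    rw [Fintype.card_congr e]
    rw [← Nat.card_eq_fintype_card, hH, Nat.card_zpowers]
  have key : ∑ a, n a = ∑ c : G ⧸ H, orderOf u * n (Quotient.out c) := by
    rw [← Fintype.sum_fiberwise (fun a : G => (QuotientGroup.mk a : G ⧸ H)) n]
    refine Finset.sum_congr rfl fun c _ => ?_
    have : ∀ a : {a : G // (QuotientGroup.mk a : G ⧸ H) = c}, n a.1 = n (Quotient.out c) := by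
      intro a
      exact hconst _ _ (by rw [a.2]; exact (QuotientGroup.out_eq' c).symm)
    calc (∑ a : {a : G // (QuotientGroup.mk a : G ⧸ H) = c}, n a.1)
        = ∑ _a : {a : G // (QuotientGroup.mk a : G ⧸ H) = c}, n (Quotient.out c) :=
          Finset.sum_congr rfl fun a _ => this a
      _ = Fintype.card {a : G // (QuotientGroup.mk a : G ⧸ H) = c} * n (Quotient.out c) := by
          rw [Finset.sum_const, smul_eq_mul, Fintype.card]
      _ = orderOf u * n (Quotient.out c) := by rw [fib c]
  rw [key, ← Finset.mul_sum]
  exact Dvd.intro _ rfl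

open Module End

lemma sum_finrank_eig {V : Type*} [AddCommGroup V] [Module ℂ V] [FiniteDimensional ℂ V]
    (f : Module.End ℂ V) {q : ℕ} [NeZero q] (hf : f ^ q = 1) {ζ : ℂ}
    (hζ : IsPrimitiveRoot ζ q) :
    ∑ a : ZMod q, finrank ℂ (f.eigenspace (ζ ^ a.val)) = finrank ℂ V := by
  classical
  have hq : q ≠ 0 := NeZero.ne q
  set E : ZMod q → Submodule ℂ V := fun a => f.eigenspace (ζ ^ a.val) with hE
  have hindep : iSupIndep E := by
    apply (f.eigenspaces_iSupIndep).comp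
    intro a b hab
    have := hζ.pow_inj (ZMod.val_lt a) (ZMod.val_lt b) hab
    exact ZMod.val_injective q this
  have hsup : ⨆ a, E a = ⊤ := by
    have hsf : Squarefree ((Polynomial.X : Polynomial ℂ) ^ q - 1) := by
      refine (Polynomial.X_pow_sub_one_separable_iff.mpr ?_).squarefree
      exact_mod_cast (Nat.cast_ne_zero (R := ℂ)).mpr hq
    have hss : f.IsSemisimple := by
      apply Module.End.isSemisimple_of_squarefree_aeval_eq_zero hsf
      simp [map_sub, Polynomial.aeval_X_pow, hf]
    have hgen : ∀ μ : ℂ, f.maxGenEigenspace μ = f.eigenspace μ := fun μ =>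
      hss.isFinitelySemisimple.maxGenEigenspace_eq_eigenspace μ
    have htop : ⨆ μ : ℂ, f.eigenspace μ = ⊤ := by
      have := Module.End.iSup_maxGenEigenspace_eq_top f
      simpa only [hgen] using this
    rw [← top_le_iff, ← htop]
    refine iSup_le fun μ => ?_
    by_cases hb : f.eigenspace μ = ⊥
    · rw [hb]; exact bot_le
    · have hev : f.HasEigenvalue μ := hb
      obtain ⟨x, hx⟩ := hev.exists_hasEigenvector
      have hμq : μ ^ q = 1 := by
        have h1 := hx.pow_apply q
        rw [hf, Module.End.one_apply] at h1
        have h2 : (μ ^ q - 1) • x = 0 := by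
          rw [sub_smul, one_smul, ← h1, sub_self]
        rcases smul_eq_zero.mp h2 with h3 | h3
        · exact sub_eq_zero.mp h3
        · exact absurd h3 hx.2
      obtain ⟨i, hi, hζi⟩ := hζ.eq_pow_of_pow_eq_one hμq
      have : f.eigenspace μ = E (i : ZMod q) := by
        rw [hE]
        simp only [ZMod.val_cast_of_lt hi, hζi]
      rw [this]
      exact le_iSup E _
  have hint : DirectSum.IsInternal E :=
    (DirectSum.isInternal_submodule_iff_iSupIndep_and_iSup_eq_top E).mpr ⟨hindep, hsup⟩
  have e : (DirectSum (ZMod q) fun a => ↥(E a)) ≃ₗ[ℂ] V :=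
    LinearEquiv.ofBijective (DirectSum.coeLinearMap E) hint
  rw [← e.finrank_eq, finrank_directSum]

noncomputable instance (n : ℕ) : Group (Matrix.specialUnitaryGroup (Fin n) ℂ) :=
  { (inferInstance : Monoid (Matrix.specialUnitaryGroup (Fin n) ℂ)) with
    inv := fun A => ⟨star A.1, by
      have hA := Matrix.mem_specialUnitaryGroup_iff.mp A.2
      rw [Matrix.mem_specialUnitaryGroup_iff]
      refine ⟨Unitary.star_mem hA.1, ?_⟩
      rw [Matrix.star_eq_conjTranspose, Matrix.det_conjTranspose, hA.2, star_one]⟩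
    inv_mul_cancel := fun A => Subtype.ext ((Unitary.mem_iff.mp
      (Matrix.mem_specialUnitaryGroup_iff.mp A.2).1).1) }

set_option maxHeartbeats 800000 in
theorem stmt12 (p q : ℕ) (hp : p.Prime) (hq : q.Prime) (hne : p ≠ q) (hpq : ¬ p ∣ (q - 1))
    (h : Matrix.specialUnitaryGroup (Fin p) ℂ) (hord : orderOf h = q)
    (hspec : (1 : ℂ) ∉ spectrum ℂ (h : Matrix (Fin p) (Fin p) ℂ))
    (t : ℕ) (ht : 0 < t) (hconj : IsConj h (h ^ t)) :
    t ≡ 1 [MOD q] := by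
  classical
  haveI : NeZero q := ⟨hq.ne_zero⟩
  haveI : Fact q.Prime := ⟨hq⟩
  -- coe of powers
  have coe_pow : ∀ (x : Matrix.specialUnitaryGroup (Fin p) ℂ) (n : ℕ),
      ((x ^ n : Matrix.specialUnitaryGroup (Fin p) ℂ) : Matrix (Fin p) (Fin p) ℂ)
        = (x : Matrix (Fin p) (Fin p) ℂ) ^ n := by
    intro x n
    induction n with
    | zero => simp
    | succ m ih => rw [pow_succ, pow_succ, ← ih]; rfl
  -- t is coprime to q
  have hcop : Nat.Coprime q t := by
    obtain ⟨c, hc⟩ := hconj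
    have h1 : orderOf h = orderOf (h ^ t) := SemiconjBy.orderOf_eq _ hc
    rw [orderOf_pow' h ht.ne', hord] at h1
    have h2 : Nat.gcd q t ∣ q := Nat.gcd_dvd_left q t
    rcases (Nat.div_eq_self).mp h1.symm with h3 | h3
    · exact absurd h3 hq.ne_zero
    · exact h3
  have hcop' : Nat.Coprime t q := hcop.symm
  -- the primitive root
  set ζ : ℂ := Complex.exp (2 * Real.pi * Complex.I / q) with hζdef
  have hζ : IsPrimitiveRoot ζ q := Complex.isPrimitiveRoot_exp q hq.ne_zero
  have hζq : ζ ^ q = 1 := hζ.pow_eq_one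
  -- the endomorphism
  set e := (Matrix.toLinAlgEquiv' : Matrix (Fin p) (Fin p) ℂ ≃ₐ[ℂ] _)
  set f : Module.End ℂ (Fin p → ℂ) := e (h : Matrix (Fin p) (Fin p) ℂ) with hfdef
  have hfq : f ^ q = 1 := by
    have h1 : (h : Matrix.specialUnitaryGroup (Fin p) ℂ) ^ q = 1 := by
      rw [← hord]; exact pow_orderOf_eq_one h
    have h2 : (h : Matrix (Fin p) (Fin p) ℂ) ^ q = 1 := by
      rw [← coe_pow, h1]; rfl
    rw [hfdef, ← map_pow, h2, map_one]
  -- multiplicity function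
  set m : ZMod q → ℕ := fun a => finrank ℂ (f.eigenspace (ζ ^ a.val)) with hmdef
  -- m 0 = 0
  have hm0 : m 0 = 0 := by
    have h1 : ¬ f.HasEigenvalue 1 := by
      rw [Module.End.hasEigenvalue_iff_mem_spectrum, hfdef, AlgEquiv.spectrum_eq]
      exact hspec
    have h2 : f.eigenspace 1 = ⊥ := by
      by_contra hb
      exact h1 hb
    have h4 : m 0 = finrank ℂ (f.eigenspace (ζ ^ (0 : ZMod q).val)) := rfl
    rw [h4, ZMod.val_zero, pow_zero, h2, finrank_bot]
  -- total
  have hsum : ∑ a : ZMod q, m a = p := by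
    rw [hmdef, sum_finrank_eig f hfq hζ]
    simp
  -- conjugation invariance of eigenspace dims for f^t
  obtain ⟨c, hc⟩ := hconj
  have hcmat : (c : Matrix (Fin p) (Fin p) ℂ) * (h : Matrix (Fin p) (Fin p) ℂ)
      = (h : Matrix (Fin p) (Fin p) ℂ) ^ t * (c : Matrix (Fin p) (Fin p) ℂ) := by
    have := congrArg (fun x : Matrix.specialUnitaryGroup (Fin p) ℂ =>
      (x : Matrix (Fin p) (Fin p) ℂ)) hc
    simpa [coe_pow] using this
  have hcu : (c : Matrix (Fin p) (Fin p) ℂ) ∈ unitary (Matrix (Fin p) (Fin p) ℂ) :=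
    (Matrix.mem_specialUnitaryGroup_iff.mp (↑c : Matrix.specialUnitaryGroup (Fin p) ℂ).prop).1
  have hc1 : star (c : Matrix (Fin p) (Fin p) ℂ) * (c : Matrix (Fin p) (Fin p) ℂ) = 1 :=
    (Unitary.mem_iff.mp hcu).1
  have hc2 : (c : Matrix (Fin p) (Fin p) ℂ) * star (c : Matrix (Fin p) (Fin p) ℂ) = 1 :=
    (Unitary.mem_iff.mp hcu).2
  have hconjM : (c : Matrix (Fin p) (Fin p) ℂ) * (h : Matrix (Fin p) (Fin p) ℂ)
      * star (c : Matrix (Fin p) (Fin p) ℂ) = (h : Matrix (Fin p) (Fin p) ℂ) ^ t := by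
    rw [hcmat, mul_assoc, hc2, mul_one]
  set G : (Module.End ℂ (Fin p → ℂ))ˣ :=
    ⟨e (c : Matrix (Fin p) (Fin p) ℂ), e (star (c : Matrix (Fin p) (Fin p) ℂ)),
      by rw [← map_mul, hc2, map_one], by rw [← map_mul, hc1, map_one]⟩ with hGdef
  have hft : f ^ t = (G : Module.End ℂ (Fin p → ℂ)) * f * ((G⁻¹ : (Module.End ℂ (Fin p → ℂ))ˣ) : Module.End ℂ (Fin p → ℂ)) := by
    have : ((G⁻¹ : (Module.End ℂ (Fin p → ℂ))ˣ) : Module.End ℂ (Fin p → ℂ))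
        = e (star (c : Matrix (Fin p) (Fin p) ℂ)) := rfl
    rw [this, hGdef, hfdef, ← map_mul, ← map_mul, hconjM, map_pow]
  have hfdim : ∀ ν : ℂ, finrank ℂ ((f ^ t).eigenspace ν) = finrank ℂ (f.eigenspace ν) := by
    intro ν
    rw [hft]
    exact finrank_eig_conj G f ν
  -- key invariance
  obtain ⟨t', -, htt'⟩ := Nat.exists_mul_mod_eq_one_of_coprime hcop' hq.one_lt
  have hkey : ∀ a : ZMod q, m ((t : ZMod q) * a) = m a := by
    intro a
    have hμq : (ζ ^ a.val) ^ q = 1 := by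
      rw [← pow_mul, mul_comm, pow_mul, hζq, one_pow]
    have h1 : (f ^ t).eigenspace ((ζ ^ a.val) ^ t) = f.eigenspace (ζ ^ a.val) :=
      eig_pow_eq f (ζ ^ a.val) hfq hμq htt'
    have hpowmod : ∀ x : ℕ, ζ ^ x = ζ ^ (x % q) := by
      intro x
      conv_lhs => rw [← Nat.div_add_mod x q]
      rw [pow_add, pow_mul, hζq, one_pow, one_mul]
    have hmod : ((t : ZMod q) * a).val ≡ a.val * t [MOD q] := by
      apply (ZMod.natCast_eq_natCast_iff _ _ _).mp
      push_cast
      rw [ZMod.natCast_val, ZMod.cast_id, ZMod.natCast_val, ZMod.cast_id]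
      ring
    have hmod' : ((t : ZMod q) * a).val % q = (a.val * t) % q := hmod
    have h2 : ζ ^ ((t : ZMod q) * a).val = (ζ ^ a.val) ^ t := by
      rw [← pow_mul, hpowmod (((t : ZMod q) * a).val), hpowmod (a.val * t), hmod']
    show finrank ℂ (f.eigenspace (ζ ^ ((t : ZMod q) * a).val)) = finrank ℂ (f.eigenspace (ζ ^ a.val))
    rw [h2, ← h1]
    exact (hfdim _).symm
  -- arithmetic finish
  set u : (ZMod q)ˣ := ZMod.unitOfCoprime t hcop' with hudef
  have hucoe : ((u : (ZMod q)ˣ) : ZMod q) = (t : ZMod q) := ZMod.coe_unitOfCoprime t hcop'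
  have hinv : ∀ x : (ZMod q)ˣ, m ↑(u * x) = m ↑x := by
    intro x
    rw [Units.val_mul, hucoe]
    exact hkey ↑x
  have hdvd1 : orderOf u ∣ ∑ x : (ZMod q)ˣ, m ↑x := orderOf_dvd_sum u (fun x => m ↑x) hinv
  have husum : ∑ x : (ZMod q)ˣ, m ↑x = p := by
    have hbij : ∑ x : (ZMod q)ˣ, m ↑x = ∑ a ∈ Finset.univ.erase (0 : ZMod q), m a := by
      apply Finset.sum_bij (fun (x : (ZMod q)ˣ) _ => (x : ZMod q))
      · intro x _
        exact Finset.mem_erase.mpr ⟨Units.ne_zero x, Finset.mem_univ _⟩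
      · intro x _ y _ hxy
        exact Units.ext hxy
      · intro b hb
        have hb0 : b ≠ 0 := (Finset.mem_erase.mp hb).1
        exact ⟨hb0.isUnit.unit, Finset.mem_univ _, rfl⟩
      · intro x _
        rfl
    rw [hbij, ← hsum]
    rw [← Finset.add_sum_erase Finset.univ m (Finset.mem_univ (0 : ZMod q)), hm0, zero_add]
  have hdvdp : orderOf u ∣ p := husum ▸ hdvd1
  have hdvdq1 : orderOf u ∣ q - 1 := by
    have h1 := orderOf_dvd_card (x := u)
    rwa [ZMod.card_units_eq_totient, Nat.totient_prime hq] at h1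
  rcases (hp.eq_one_or_self_of_dvd _ hdvdp) with hd | hd
  · have hu1 : u = 1 := orderOf_eq_one_iff.mp hd
    have : (t : ZMod q) = ((1 : ℕ) : ZMod q) := by
      rw [← hucoe, hu1]
      simp
    exact (ZMod.natCast_eq_natCast_iff _ _ _).mp this
  · exact absurd (hd ▸ hdvdq1) hpq
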